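/- Let α ∈ (0,1), let n be a positive integer, and put F(u) = max(0, (u−α)/(1−α)) and Mₙ(u) = F(1 − (1−u)^{1/n}) for u ∈ [0,1]. Let X and Y be real random variables with E[max(0,−Y)] < ∞ whose distributions are related by P[−Y ≤ t] = 1 − (P[−X > t])^{1/n} for all t ∈ ℝ. Then ES_α(Y) = ∫_0^1 VaR_u(X) Mₙ(du), where the integral is with respect to the Lebesgue–Stieltjes measure of the distribution function Mₙ on [0,1]. (Thus X ↦ ES_α(Y) defines a spectral risk measure ES_α^{(n)} sensitive to the n-th moment of X.) -/

import Mathlib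

open MeasureTheory Set

/-- The `α`-quantile of a real random variable `X`:
`q_α(X) = inf {x ∈ ℝ : P[X ≤ x] ≥ α}`. -/
noncomputable def quantile {Ω : Type*} [MeasurableSpace Ω] (μ : Measure Ω)
    (X : Ω → ℝ) (α : ℝ) : ℝ :=
  sInf {x : ℝ | ENNReal.ofReal α ≤ μ {ω | X ω ≤ x}}

/-- Value-at-risk at level `α`: `VaR_α(X) = q_α(-X)`. -/
noncomputable def VaR {Ω : Type*} [MeasurableSpace Ω] (μ : Measure Ω)
    (X : Ω → ℝ) (α : ℝ) : ℝ :=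
  quantile μ (fun ω => - X ω) α

/-- Expected Shortfall at level `α`:
`ES_α(X) = -(1-α)⁻¹ (E[X·1{-X ≥ q_α(-X)}] + q_α(-X)·(α - P[-X < q_α(-X)]))`. -/
noncomputable def ES {Ω : Type*} [MeasurableSpace Ω] (μ : Measure Ω)
    (X : Ω → ℝ) (α : ℝ) : ℝ :=
  - (1 - α)⁻¹ * ((∫ ω in {ω | quantile μ (fun ω' => - X ω') α ≤ - X ω}, X ω ∂μ)
    + quantile μ (fun ω' => - X ω') α
      * (α - (μ {ω | - X ω < quantile μ (fun ω' => - X ω') α}).toReal))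

open Filter Topology ProbabilityTheory

private lemma quantile_aux_eq {Ω : Type*} [MeasurableSpace Ω] (μ : Measure Ω)
    (W : Ω → ℝ) (hW : Measurable W) (p : ℝ) :
    sInf {x : ℝ | ENNReal.ofReal p ≤ μ {ω | W ω ≤ x}}
      = sInf {x : ℝ | ENNReal.ofReal p ≤ (Measure.map W μ) (Iic x)} := by
  congr 1
  ext x
  rw [mem_setOf_eq, mem_setOf_eq, Measure.map_apply hW measurableSet_Iic]
  rfl

private lemma qf_le_iff (ρ : Measure ℝ) [IsProbabilityMeasure ρ] {p : ℝ}
    (hp0 : 0 < p) (hp1 : p < 1) (s : ℝ) :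
    sInf {x : ℝ | ENNReal.ofReal p ≤ ρ (Iic x)} ≤ s ↔ p ≤ cdf ρ s := by
  have hset : {x : ℝ | ENNReal.ofReal p ≤ ρ (Iic x)} = {x : ℝ | p ≤ cdf ρ x} := by
    ext x
    rw [mem_setOf_eq, mem_setOf_eq, ← ofReal_cdf ρ x,
      ENNReal.ofReal_le_ofReal_iff (cdf_nonneg ρ x)]
  rw [hset]
  set S := {x : ℝ | p ≤ cdf ρ x} with hS
  have hne : S.Nonempty := by
    obtain ⟨x, hx⟩ := ((tendsto_cdf_atTop ρ).eventually (eventually_ge_nhds hp1)).exists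
    exact ⟨x, hx⟩
  have hbdd : BddBelow S := by
    obtain ⟨x, hx⟩ := ((tendsto_cdf_atBot ρ).eventually (eventually_lt_nhds hp0)).exists
    refine ⟨x, fun y hy => ?_⟩
    by_contra hc
    push_neg at hc
    exact absurd (hy.trans (monotone_cdf ρ hc.le)) (not_le.mpr hx)
  have hq : p ≤ cdf ρ (sInf S) := by
    have hcont : Tendsto (cdf ρ) (𝓝[>] (sInf S)) (𝓝 (cdf ρ (sInf S))) :=
      ((cdf ρ).right_continuous (sInf S)).mono_left
        (nhdsWithin_mono _ Ioi_subset_Ici_self)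
    refine ge_of_tendsto hcont ?_
    filter_upwards [self_mem_nhdsWithin] with x hx
    obtain ⟨y, hyS, hyx⟩ := (csInf_lt_iff hbdd hne).mp hx
    exact hyS.trans (monotone_cdf ρ hyx.le)
  constructor
  · intro h
    exact hq.trans (monotone_cdf ρ h)
  · intro h
    exact csInf_le hbdd h

/-- For `Mₙ(u) = F(1 - (1-u)^{1/n})` with `F(u) = max(0, (u-α)/(1-α))`, and `X`, `Y` related
by `P[-Y ≤ t] = 1 - (P[-X > t])^{1/n}`, one has `ES_α(Y) = ∫_0^1 VaR_u(X) Mₙ(du)`;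
thus `X ↦ ES_α(Y)` defines a spectral risk measure sensitive to the `n`-th moment of `X`. -/
theorem es_n_eq_stieltjes_integral_var {Ω Ω' : Type*}
    [MeasurableSpace Ω] [MeasurableSpace Ω']
    (μ : Measure Ω) (ν : Measure Ω') [IsProbabilityMeasure μ] [IsProbabilityMeasure ν]
    (α : ℝ) (hα : α ∈ Set.Ioo (0 : ℝ) 1) (n : ℕ) (hn : 0 < n)
    (M : StieltjesFunction ℝ)
    (hM : ∀ u : ℝ, M u = if u < 0 then 0 else if u ≤ 1 then
      max 0 ((1 - (1 - u) ^ ((n : ℝ)⁻¹) - α) / (1 - α)) else 1)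
    (X : Ω → ℝ) (Y : Ω' → ℝ) (hX : Measurable X) (hY : Measurable Y)
    (hrel : ∀ t : ℝ, (ν {ω | - Y ω ≤ t}).toReal
      = 1 - ((μ {ω | t < - X ω}).toReal) ^ ((n : ℝ)⁻¹))
    (hint : Integrable (fun ω => max 0 (- Y ω)) ν) :
    ES ν Y α = ∫ u in Set.Ioo (0 : ℝ) 1, VaR μ X u ∂M.measure := by
  obtain ⟨hα0, hα1⟩ := hα
  have hβ0 : (0:ℝ) < 1 - α := by linarith
  have hn' : (0:ℝ) < n := Nat.cast_pos.mpr hn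
  have hZm : Measurable (fun ω => - Y ω) := hY.neg
  have hWm : Measurable (fun ω => - X ω) := hX.neg
  set ρZ := Measure.map (fun ω => - Y ω) ν with hρZ
  set ρW := Measure.map (fun ω => - X ω) μ with hρW
  have hPZ : IsProbabilityMeasure ρZ := Measure.isProbabilityMeasure_map hZm.aemeasurable
  have hPW : IsProbabilityMeasure ρW := Measure.isProbabilityMeasure_map hWm.aemeasurable
  -- cdf identities
  have hcdfZ : ∀ t : ℝ, cdf ρZ t = (ν {ω | - Y ω ≤ t}).toReal := by
    intro t
    rw [cdf_eq_real, measureReal_def, hρZ, Measure.map_apply hZm measurableSet_Iic]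
    rfl
  have hcdfW : ∀ t : ℝ, cdf ρW t = (μ {ω | - X ω ≤ t}).toReal := by
    intro t
    rw [cdf_eq_real, measureReal_def, hρW, Measure.map_apply hWm measurableSet_Iic]
    rfl
  have hgW : ∀ t : ℝ, (μ {ω | t < - X ω}).toReal = 1 - cdf ρW t := by
    intro t
    have hs : {ω | t < - X ω} = {ω | - X ω ≤ t}ᶜ := by
      ext ω; simp [not_le]
    have hms : MeasurableSet {ω | - X ω ≤ t} := hWm measurableSet_Iic
    rw [hs, measure_compl hms (measure_ne_top μ _), measure_univ,
      ENNReal.toReal_sub_of_le prob_le_one ENNReal.one_ne_top, ENNReal.toReal_one, hcdfW]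
  have hrel' : ∀ t : ℝ, cdf ρZ t = 1 - (1 - cdf ρW t) ^ ((n : ℝ)⁻¹) := by
    intro t
    rw [hcdfZ, hrel t, hgW t]
  have hgZ : ∀ t : ℝ, (ν {ω | t < - Y ω}).toReal = 1 - cdf ρZ t := by
    intro t
    have hs : {ω | t < - Y ω} = {ω | - Y ω ≤ t}ᶜ := by
      ext ω; simp [not_le]
    have hms : MeasurableSet {ω | - Y ω ≤ t} := hZm measurableSet_Iic
    rw [hs, measure_compl hms (measure_ne_top ν _), measure_univ,
      ENNReal.toReal_sub_of_le prob_le_one ENNReal.one_ne_top, ENNReal.toReal_one, hcdfZ]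
  -- the level u_α
  set uα : ℝ := 1 - (1 - α) ^ n with huα_def
  have hβn_pos : (0:ℝ) < (1 - α) ^ n := pow_pos hβ0 n
  have hβn_lt1 : (1 - α) ^ n < 1 := pow_lt_one₀ hβ0.le (by linarith) hn.ne'
  have huα0 : 0 < uα := by simp only [huα_def]; linarith
  have huα1 : uα < 1 := by simp only [huα_def]; linarith
  have hpowβ : (1 - uα) ^ ((n : ℝ)⁻¹) = 1 - α := by
    have : 1 - uα = (1 - α) ^ n := by simp [huα_def]
    rw [this, Real.pow_rpow_inv_natCast hβ0.le hn.ne']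
  have hEquiv : ∀ s : ℝ, (α ≤ cdf ρZ s ↔ uα ≤ cdf ρW s) := by
    intro s
    rw [hrel' s]
    have h1 : (0:ℝ) ≤ 1 - cdf ρW s := by linarith [cdf_le_one ρW s]
    have key : (1 - cdf ρW s) ^ ((n : ℝ)⁻¹) ≤ 1 - α ↔ 1 - cdf ρW s ≤ (1 - α) ^ n := by
      rw [← Real.rpow_natCast (1 - α) n]
      exact Real.rpow_inv_le_iff_of_pos h1 hβ0.le hn'
    constructor
    · intro h
      have h2 : (1 - cdf ρW s) ^ ((n : ℝ)⁻¹) ≤ 1 - α := by linarith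
      have := key.mp h2
      simp only [huα_def]; linarith
    · intro h
      have h2 : 1 - cdf ρW s ≤ (1 - α) ^ n := by simp only [huα_def] at h; linarith
      have := key.mpr h2
      linarith
  -- quantile duality
  set q : ℝ := quantile ν (fun ω' => - Y ω') α with hq_def
  have hq_le_iffZ : ∀ s : ℝ, (q ≤ s ↔ α ≤ cdf ρZ s) := by
    intro s
    rw [hq_def, quantile, quantile_aux_eq ν _ hZm α]
    exact qf_le_iff ρZ hα0 hα1 s
  have hq_le_iffW : ∀ s : ℝ, (q ≤ s ↔ uα ≤ cdf ρW s) :=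
    fun s => (hq_le_iffZ s).trans (hEquiv s)
  have hVaR_le_iff : ∀ p : ℝ, p ∈ Ioo (0:ℝ) 1 → ∀ s : ℝ, (VaR μ X p ≤ s ↔ p ≤ cdf ρW s) := by
    intro p hp s
    rw [VaR, quantile, quantile_aux_eq μ _ hWm p]
    exact qf_le_iff ρW hp.1 hp.2 s
  -- Step 1 : ES ν Y α = q + (1-α)⁻¹ * E
  set E : ℝ := ∫ ω, max 0 (- Y ω - q) ∂ν with hE_def
  have hmeasE : Measurable (fun ω => max 0 (- Y ω - q)) :=
    measurable_const.max (hZm.sub measurable_const)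
  have hintE : Integrable (fun ω => max 0 (- Y ω - q)) ν := by
    refine Integrable.mono' (hint.add (integrable_const |q|))
      hmeasE.aestronglyMeasurable ?_
    filter_upwards with ω
    simp only [Pi.add_apply]
    rw [Real.norm_eq_abs, abs_of_nonneg (le_max_left _ _)]
    have h1 : - Y ω ≤ max 0 (- Y ω) := le_max_right _ _
    have h2 : (0:ℝ) ≤ max 0 (- Y ω) := le_max_left _ _
    have h3 : -q ≤ |q| := neg_le_abs q
    have h0 : (0:ℝ) ≤ |q| := abs_nonneg q
    exact max_le (by linarith) (by linarith)
  have hA : MeasurableSet {ω | q ≤ - Y ω} := measurableSet_le measurable_const hZm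
  have hZA_int : IntegrableOn (fun ω => - Y ω) {ω | q ≤ - Y ω} ν := by
    refine Integrable.mono' (hintE.add (integrable_const |q|)).restrict
      hZm.aestronglyMeasurable.restrict ?_
    rw [ae_restrict_iff' hA]
    filter_upwards with ω hω
    simp only [Pi.add_apply]
    rw [Real.norm_eq_abs]
    have h3 : - Y ω - q ≤ max 0 (- Y ω - q) := le_max_right _ _
    have h4 : (0:ℝ) ≤ max 0 (- Y ω - q) := le_max_left _ _
    have h5 : q ≤ |q| := le_abs_self q
    have h6 : -|q| ≤ q := neg_abs_le q
    rcases abs_cases (- Y ω) with ⟨h1, _⟩ | ⟨h1, _⟩ <;> rw [h1]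
    · linarith
    · have : q ≤ - Y ω := hω
      linarith
  have key1 : ∫ ω in {ω | q ≤ - Y ω}, Y ω ∂ν
      = - E - q * (ν {ω | q ≤ - Y ω}).toReal := by
    have h1 : ∫ ω in {ω | q ≤ - Y ω}, (- Y ω - q) ∂ν = E := by
      rw [hE_def, ← integral_indicator hA]
      congr 1
      funext ω
      by_cases hω : ω ∈ {ω | q ≤ - Y ω}
      · rw [indicator_of_mem hω, max_eq_right (by simpa [sub_nonneg] using hω)]
      · rw [indicator_of_notMem hω, max_eq_left]
        have : ¬ q ≤ - Y ω := hω
        linarith [this]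
    have h2 : ∫ ω in {ω | q ≤ - Y ω}, (- Y ω - q) ∂ν
        = (∫ ω in {ω | q ≤ - Y ω}, (- Y ω) ∂ν) - q * (ν {ω | q ≤ - Y ω}).toReal := by
      rw [integral_sub hZA_int ((integrableOn_const_iff (C := q)).mpr (Or.inr (measure_lt_top ν _))),
        setIntegral_const, smul_eq_mul, mul_comm, measureReal_def]
    have h3 : ∫ ω in {ω | q ≤ - Y ω}, (- Y ω) ∂ν = - ∫ ω in {ω | q ≤ - Y ω}, Y ω ∂ν := by
      rw [← integral_neg]
    rw [h2, h3] at h1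
    linarith
  have hcompl : (ν {ω | q ≤ - Y ω}).toReal + (ν {ω | - Y ω < q}).toReal = 1 := by
    have hs : {ω | - Y ω < q} = {ω | q ≤ - Y ω}ᶜ := by
      ext ω; simp [not_le]
    rw [hs, measure_compl hA (measure_ne_top ν _), measure_univ,
      ENNReal.toReal_sub_of_le prob_le_one ENNReal.one_ne_top, ENNReal.toReal_one]
    ring
  have hES : ES ν Y α = q + (1 - α)⁻¹ * E := by
    rw [ES]
    rw [show quantile ν (fun ω' => - Y ω') α = q from rfl]
    rw [key1]
    have hb : (ν {ω | - Y ω < q}).toReal = 1 - (ν {ω | q ≤ - Y ω}).toReal := by linarith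
    rw [hb]
    field_simp
    ring
  -- values of M
  have hMval : ∀ v : ℝ, uα ≤ v → v ≤ 1 → M v = (1 - (1 - v) ^ ((n:ℝ)⁻¹) - α) / (1 - α) := by
    intro v h1 h2
    rw [hM v, if_neg (by push_neg; linarith), if_pos h2, max_eq_right]
    refine div_nonneg ?_ hβ0.le
    have hv1 : (0:ℝ) ≤ 1 - v := by linarith
    have hle : 1 - v ≤ 1 - uα := by linarith
    have hmono : (1 - v) ^ ((n:ℝ)⁻¹) ≤ (1 - uα) ^ ((n:ℝ)⁻¹) :=
      Real.rpow_le_rpow hv1 hle (by positivity)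
    rw [hpowβ] at hmono
    linarith
  have hM0 : M 0 = 0 := by
    rw [hM 0, if_neg (lt_irrefl 0), if_pos zero_le_one, sub_zero, Real.one_rpow, max_eq_left]
    exact div_nonpos_of_nonpos_of_nonneg (by linarith) hβ0.le
  have hMuα : M uα = 0 := by
    rw [hMval uα le_rfl huα1.le, hpowβ, show (1:ℝ) - (1 - α) - α = 0 by ring, zero_div]
  -- left limit of M at 1
  have hleft : Function.leftLim M 1 = 1 := by
    have hnne : (0:ℝ) < (n:ℝ)⁻¹ := by positivity
    have h1 : ContinuousAt (fun v : ℝ => v ^ ((n:ℝ)⁻¹)) ((1:ℝ) - 1) := by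
      rw [sub_self]
      exact Real.continuousAt_rpow_const 0 _ (Or.inr hnne.le)
    have h2 : ContinuousAt (fun u : ℝ => 1 - u) 1 := by fun_prop
    have h3 : ContinuousAt (fun u : ℝ => (1 - u) ^ ((n:ℝ)⁻¹)) 1 := h1.comp h2
    have hcont : ContinuousAt (fun u : ℝ => (1 - (1 - u) ^ ((n:ℝ)⁻¹) - α) / (1 - α)) 1 :=
      ((continuousAt_const.sub h3).sub continuousAt_const).div_const _
    have hval : (1 - ((1:ℝ) - 1) ^ ((n:ℝ)⁻¹) - α) / (1 - α) = 1 := by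
      rw [sub_self, Real.zero_rpow hnne.ne', sub_zero, div_self hβ0.ne']
    have h4 : Tendsto (fun u : ℝ => (1 - (1 - u) ^ ((n:ℝ)⁻¹) - α) / (1 - α)) (𝓝[<] (1:ℝ))
        (𝓝 1) := by
      have := hcont.tendsto.mono_left (nhdsWithin_le_nhds : 𝓝[<] (1:ℝ) ≤ 𝓝 1)
      rwa [hval] at this
    have htend : Tendsto M (𝓝[<] (1:ℝ)) (𝓝 1) := by
      refine Tendsto.congr' ?_ h4
      filter_upwards [Ioo_mem_nhdsLT_of_mem (⟨huα1, le_rfl⟩ : (1:ℝ) ∈ Ioc uα 1)] with u hu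
      exact (hMval u hu.1.le hu.2.le).symm
    exact leftLim_eq_of_tendsto htend
  -- measure computations
  have hIoo01 : M.measure (Ioo (0:ℝ) 1) = 1 := by
    rw [StieltjesFunction.measure_Ioo, hleft, hM0, sub_zero, ENNReal.ofReal_one]
  have hIoc0uα : M.measure (Ioc (0:ℝ) uα) = 0 := by
    rw [StieltjesFunction.measure_Ioc, hMuα, hM0, sub_zero, ENNReal.ofReal_zero]
  have htail : ∀ s : ℝ, q ≤ s →
      M.measure (Ioo (cdf ρW s) 1) = ENNReal.ofReal ((1 - cdf ρW s) ^ ((n:ℝ)⁻¹) / (1 - α)) := by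
    intro s hs
    have hc1 : cdf ρW s ≤ 1 := cdf_le_one _ _
    have hcα : uα ≤ cdf ρW s := (hq_le_iffW s).mp hs
    rw [StieltjesFunction.measure_Ioo, hleft, hMval _ hcα hc1]
    congr 1
    field_simp
    ring
  -- measurability of the truncated VaR function
  have hφmeas : Measurable (fun u : ℝ => if u ∈ Ioo (0:ℝ) 1 then VaR μ X u else 0) := by
    apply measurable_of_Iic
    intro s
    classical
    have hpre : (fun u : ℝ => if u ∈ Ioo (0:ℝ) 1 then VaR μ X u else 0) ⁻¹' Iic s
        = (Ioo (0:ℝ) 1 ∩ Iic (cdf ρW s)) ∪ ((Ioo (0:ℝ) 1)ᶜ ∩ (if (0:ℝ) ≤ s then univ else ∅)) := by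
      ext u
      by_cases hu : u ∈ Ioo (0:ℝ) 1
      · simp only [mem_preimage, mem_Iic, if_pos hu, mem_union, mem_inter_iff, hu, true_and,
          mem_compl_iff, not_true, false_and, or_false]
        exact hVaR_le_iff u hu s
      · have hu' : ¬((0:ℝ) < u ∧ u < 1) := by simpa [Set.mem_Ioo] using hu
        by_cases hs0 : (0:ℝ) ≤ s <;> simp [hu', hu, hs0]
    rw [hpre]
    refine (measurableSet_Ioo.inter measurableSet_Iic).union
      (measurableSet_Ioo.compl.inter ?_)
    split_ifs <;> simp
  set R := M.measure.restrict (Ioo (0:ℝ) 1) with hR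
  have haeIoo : ∀ᵐ u ∂ R, u ∈ Ioo (0:ℝ) 1 :=
    ae_restrict_mem (μ := M.measure) measurableSet_Ioo
  have hae1 : (fun u => VaR μ X u - q)
      =ᵐ[R] (fun u => (if u ∈ Ioo (0:ℝ) 1 then VaR μ X u else 0) - q) := by
    filter_upwards [haeIoo] with u hu
    rw [if_pos hu]
  have hfae : AEMeasurable (fun u => VaR μ X u - q) R :=
    ((hφmeas.sub measurable_const).aemeasurable).congr hae1.symm
  have hnull : R (Ioc (0:ℝ) uα) = 0 := by
    rw [hR, Measure.restrict_apply' measurableSet_Ioo]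
    exact le_antisymm (le_trans (measure_mono inter_subset_left) hIoc0uα.le) zero_le
  have hae_nonneg : 0 ≤ᵐ[R] (fun u => VaR μ X u - q) := by
    filter_upwards [haeIoo, measure_eq_zero_iff_ae_notMem.mp hnull] with u hu hu2
    have huα_lt : uα < u := by
      by_contra hc
      push_neg at hc
      exact hu2 ⟨hu.1, hc⟩
    have h1 : u ≤ cdf ρW (VaR μ X u) := (hVaR_le_iff u hu (VaR μ X u)).mp le_rfl
    have h3 : q ≤ VaR μ X u := (hq_le_iffW _).mpr (le_trans huα_lt.le h1)
    simp only [Pi.zero_apply]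
    linarith
  -- layer cake on the ν-side
  have hlayZ : ∫⁻ ω, ENNReal.ofReal (max 0 (- Y ω - q)) ∂ν
      = ∫⁻ t in Ioi (0:ℝ), ENNReal.ofReal ((1 - cdf ρW (q + t)) ^ ((n:ℝ)⁻¹)) := by
    rw [lintegral_eq_lintegral_meas_lt (f := fun ω => max 0 (- Y ω - q)) ν
      (ae_of_all _ fun ω => le_max_left _ _) hmeasE.aemeasurable]
    refine setLIntegral_congr_fun measurableSet_Ioi (fun t ht => ?_)
    have ht0 : (0:ℝ) < t := ht
    have hset : {ω | t < max 0 (- Y ω - q)} = {ω | q + t < - Y ω} := by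
      ext ω
      simp only [mem_setOf_eq, lt_max_iff]
      constructor
      · rintro (h | h)
        · linarith
        · linarith
      · intro h
        right
        linarith
    rw [hset, ← ENNReal.ofReal_toReal (measure_ne_top ν {ω | q + t < - Y ω}),
      hgZ (q + t), hrel' (q + t), sub_sub_cancel]
  -- layer cake on the M-side
  have hlayR : ∫⁻ u, ENNReal.ofReal (VaR μ X u - q) ∂ R
      = ∫⁻ t in Ioi (0:ℝ), ENNReal.ofReal ((1 - cdf ρW (q + t)) ^ ((n:ℝ)⁻¹) / (1 - α)) := by
    rw [lintegral_eq_lintegral_meas_lt (f := fun u => VaR μ X u - q) R hae_nonneg hfae]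
    refine setLIntegral_congr_fun measurableSet_Ioi (fun t ht => ?_)
    have ht0 : (0:ℝ) < t := ht
    rw [hR, Measure.restrict_apply' measurableSet_Ioo]
    have hset : {u | t < VaR μ X u - q} ∩ Ioo (0:ℝ) 1 = Ioo (cdf ρW (q + t)) 1 := by
      ext u
      simp only [mem_inter_iff, mem_setOf_eq, mem_Ioo]
      constructor
      · rintro ⟨h1, h2, h3⟩
        refine ⟨?_, h3⟩
        by_contra hc
        push_neg at hc
        have := (hVaR_le_iff u ⟨h2, h3⟩ (q + t)).mpr hc
        linarith
      · rintro ⟨h1, h2⟩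
        have h0 : 0 < u := lt_of_le_of_lt (cdf_nonneg ρW (q + t)) h1
        refine ⟨?_, h0, h2⟩
        by_contra hc
        push_neg at hc
        have h4 : u ≤ cdf ρW (q + t) := (hVaR_le_iff u ⟨h0, h2⟩ (q + t)).mp (by linarith)
        linarith
    rw [hset]
    exact htail (q + t) (by linarith)
  have hconv : ∫⁻ t in Ioi (0:ℝ), ENNReal.ofReal ((1 - cdf ρW (q + t)) ^ ((n:ℝ)⁻¹) / (1 - α))
      = (∫⁻ t in Ioi (0:ℝ), ENNReal.ofReal ((1 - cdf ρW (q + t)) ^ ((n:ℝ)⁻¹)))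
        * (ENNReal.ofReal (1 - α))⁻¹ := by
    rw [← lintegral_mul_const' _ _
      (ENNReal.inv_ne_top.mpr (ENNReal.ofReal_pos.mpr hβ0).ne')]
    refine lintegral_congr fun t => ?_
    rw [ENNReal.ofReal_div_of_pos hβ0, div_eq_mul_inv]
  have hfinZ : ∫⁻ ω, ENNReal.ofReal (max 0 (- Y ω - q)) ∂ν < ⊤ := hintE.lintegral_lt_top
  have hfinR : ∫⁻ u, ENNReal.ofReal (VaR μ X u - q) ∂ R < ⊤ := by
    rw [hlayR, hconv, ← hlayZ]
    exact ENNReal.mul_lt_top hfinZ (ENNReal.inv_lt_top.mpr (ENNReal.ofReal_pos.mpr hβ0))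
  have hint_f : Integrable (fun u => VaR μ X u - q) R := by
    refine ⟨hfae.aestronglyMeasurable, ?_⟩
    rw [hasFiniteIntegral_iff_ofReal hae_nonneg]
    exact hfinR
  have hEeq : ENNReal.ofReal E = ∫⁻ ω, ENNReal.ofReal (max 0 (- Y ω - q)) ∂ν := by
    rw [hE_def, integral_eq_lintegral_of_nonneg_ae (f := fun ω => max 0 (- Y ω - q))
      (ae_of_all _ fun ω => le_max_left _ _)
      hmeasE.aestronglyMeasurable, ENNReal.ofReal_toReal hfinZ.ne]
  have hEnn : (0:ℝ) ≤ E := hE_def ▸ integral_nonneg fun ω => le_max_left _ _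
  have hRE : ∫ u, (VaR μ X u - q) ∂ R = (1 - α)⁻¹ * E := by
    rw [integral_eq_lintegral_of_nonneg_ae (f := fun u => VaR μ X u - q)
      hae_nonneg hfae.aestronglyMeasurable, hlayR, hconv, ← hlayZ, ← hEeq, ENNReal.toReal_mul, ENNReal.toReal_inv,
      ENNReal.toReal_ofReal hβ0.le, ENNReal.toReal_ofReal hEnn]
    ring
  -- conclusion
  rw [hES]
  have hRuniv : R univ = 1 := by
    rw [hR, Measure.restrict_apply_univ, hIoo01]
  haveI : IsFiniteMeasure R := ⟨by rw [hRuniv]; exact ENNReal.one_lt_top⟩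
  have hsplit : ∫ u, VaR μ X u ∂ R = ∫ u, ((VaR μ X u - q) + q) ∂ R := by
    congr 1
    funext u
    ring
  rw [show (∫ u in Ioo (0:ℝ) 1, VaR μ X u ∂M.measure) = ∫ u, VaR μ X u ∂ R from rfl,
    hsplit, integral_add hint_f (integrable_const q), integral_const, measureReal_def, hRuniv, hRE]
  simp
  ring
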